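/- arXiv:2305.15501 — 9 statements merged into one kernel-verified Lean document; each statement's English description precedes it below -/
import Mathlib

section
/- There exists a joint probability distribution p on a finite product V × V with full support such that the MRF distribution q(w1,w2) ∝ p_{1|2}(w1|w2)·p_{2|1}(w2|w1) has a conditional q_{1|2}(·|w2) that differs from p_{1|2}(·|w2) for some w2 ∈ V; i.e., the MRF construction is not faithful to compatible conditionals in general. -/
/-- The MRF construction from a strictly positive joint `p` on `V × V` has, for
some `w2`, a conditional `q_{1|2}(·|w2)` that differs from `p_{1|2}(·|w2)`. -/
def MRFUnfaithfulAt (V : Type) [Fintype V] (p : V → V → ℝ) : Prop :=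
  (∀ w1 w2, 0 < p w1 w2) ∧ (∑ w1 : V, ∑ w2 : V, p w1 w2) = 1 ∧
  let p12 : V → V → ℝ := fun w1 w2 => p w1 w2 / ∑ w' : V, p w' w2
  let p21 : V → V → ℝ := fun w2 w1 => p w1 w2 / ∑ w' : V, p w1 w'
  let Z : ℝ := ∑ w1 : V, ∑ w2 : V, p12 w1 w2 * p21 w2 w1
  let q : V → V → ℝ := fun w1 w2 => p12 w1 w2 * p21 w2 w1 / Z
  let q12 : V → V → ℝ := fun w1 w2 => q w1 w2 / ∑ w' : V, q w' w2
  ∃ w2 w1, q12 w1 w2 ≠ p12 w1 w2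

/-- There exists a strictly positive joint distribution on a finite
product `V × V` such that the MRF construction `q(w1,w2) ∝ p_{1|2}(w1|w2)·p_{2|1}(w2|w1)`
is not faithful to the (compatible) conditionals of `p`. -/
theorem mrf_not_faithful_in_general :
    ∃ (V : Type) (inst : Fintype V) (_ : Nonempty V) (p : V → V → ℝ),
      @MRFUnfaithfulAt V inst p := by
  refine ⟨Fin 2, inferInstance, ⟨0⟩, fun i j => ![![(0.4:ℝ), 0.1], ![0.2, 0.3]] i j, ?_, ?_, ?_⟩
  · intro w1 w2; fin_cases w1 <;> fin_cases w2 <;> norm_num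
  · simp only [Fin.sum_univ_two]; norm_num
  · refine ⟨0, 0, ?_⟩
    simp only [Fin.sum_univ_two]
    norm_num
end

section
/- For any strictly positive joint distribution p on V × V, the KL divergence KL(p_{1|2}(·|w2) ‖ q_{1|2}(·|w2)) equals the Jensen gap log E_{w∼p_{1|2}(·|w2)}[p_{2|1}(w2|w)] − E_{w∼p_{1|2}(·|w2)}[log p_{2|1}(w2|w)], where q is the MRF construction q(w1,w2) ∝ p_{1|2}(w1|w2)·p_{2|1}(w2|w1). -/
/-- For a strictly positive joint `p` on `V × V`, the KL divergence
from `p_{1|2}(·|w2)` to the MRF conditional `q_{1|2}(·|w2)` equals the Jensen gap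
`log E_{w ∼ p_{1|2}(·|w2)}[p_{2|1}(w2|w)] − E_{w ∼ p_{1|2}(·|w2)}[log p_{2|1}(w2|w)]`. -/
theorem kl_to_mrf_conditional_eq_jensen_gap
    {V : Type*} [Fintype V] [Nonempty V] (p : V → V → ℝ)
    (hpos : ∀ w1 w2, 0 < p w1 w2)
    (hsum : (∑ w1 : V, ∑ w2 : V, p w1 w2) = 1) (w2 : V) :
    let p1 : V → ℝ := fun w1 => ∑ w' : V, p w1 w'
    let p2 : V → ℝ := fun v => ∑ w' : V, p w' v
    let p12 : V → V → ℝ := fun a b => p a b / p2 b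
    let p21 : V → V → ℝ := fun b a => p a b / p1 a
    let Z : ℝ := ∑ a : V, ∑ b : V, p12 a b * p21 b a
    let q : V → V → ℝ := fun a b => p12 a b * p21 b a / Z
    let q12 : V → V → ℝ := fun a b => q a b / ∑ w' : V, q w' b
    (∑ w : V, p12 w w2 * Real.log (p12 w w2 / q12 w w2))
      = Real.log (∑ w : V, p12 w w2 * p21 w2 w)
        - ∑ w : V, p12 w w2 * Real.log (p21 w2 w) := by
  intro p1 p2 p12 p21 Z q q12
  have hp1 : ∀ a, 0 < p1 a := fun a => Finset.sum_pos (fun _ _ => hpos a _) Finset.univ_nonempty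
  have hp2 : ∀ b, 0 < p2 b := fun b => Finset.sum_pos (fun _ _ => hpos _ b) Finset.univ_nonempty
  have hp12 : ∀ a b, 0 < p12 a b := fun a b => div_pos (hpos a b) (hp2 b)
  have hp21 : ∀ b a, 0 < p21 b a := fun b a => div_pos (hpos a b) (hp1 a)
  have hZ : 0 < Z :=
    Finset.sum_pos (fun a _ => Finset.sum_pos (fun b _ => mul_pos (hp12 a b) (hp21 b a))
      Finset.univ_nonempty) Finset.univ_nonempty
  set S : ℝ := ∑ w : V, p12 w w2 * p21 w2 w with hSdef
  have hS : 0 < S :=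
    Finset.sum_pos (fun w _ => mul_pos (hp12 w w2) (hp21 w2 w)) Finset.univ_nonempty
  have hqsum : (∑ w' : V, q w' w2) = S / Z := by
    simp only [q, hSdef, ← Finset.sum_div]
  have hq12 : ∀ w, q12 w w2 = p12 w w2 * p21 w2 w / S := by
    intro w
    simp only [q12, q, hqsum]
    rw [div_div_eq_mul_div, div_mul_cancel₀ _ hZ.ne']
  have hsum1 : (∑ w : V, p12 w w2) = 1 := by
    simp only [p12, ← Finset.sum_div]
    exact div_self (hp2 w2).ne'
  have hlog : ∀ w : V, Real.log (p12 w w2 / q12 w w2)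
      = Real.log S - Real.log (p21 w2 w) := by
    intro w
    rw [hq12 w]
    rw [show p12 w w2 / (p12 w w2 * p21 w2 w / S) = S / p21 w2 w by
      rw [div_div_eq_mul_div, mul_comm (p12 w w2) (p21 w2 w),
        mul_comm (p12 w w2) S, mul_div_mul_right _ _ (hp12 w w2).ne']]
    exact Real.log_div hS.ne' (hp21 w2 w).ne'
  calc (∑ w : V, p12 w w2 * Real.log (p12 w w2 / q12 w w2))
      = ∑ w : V, (p12 w w2 * Real.log S - p12 w w2 * Real.log (p21 w2 w)) := by
        refine Finset.sum_congr rfl fun w _ => ?_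
        rw [hlog w]; ring
    _ = (∑ w : V, p12 w w2) * Real.log S - ∑ w : V, p12 w w2 * Real.log (p21 w2 w) := by
        rw [Finset.sum_sub_distrib, ← Finset.sum_mul]
    _ = Real.log S - ∑ w : V, p12 w w2 * Real.log (p21 w2 w) := by rw [hsum1, one_mul]
end

section
/- For any strictly positive joint distribution p on V × V and any w2 ∈ V, the KL divergence from p_{1|2}(·|w2) to the MRF conditional q_{1|2}(·|w2) is nonnegative, with equality if and only if p_{2|1}(w2|w) is constant over all w in V. -/
lemma gibbs_aux {V : Type*} [Fintype V] (a b : V → ℝ)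
    (ha : ∀ i, 0 < a i) (hb : ∀ i, 0 < b i)
    (hsa : ∑ i, a i = 1) (hsb : ∑ i, b i = 1) :
    0 ≤ ∑ i, a i * Real.log (a i / b i) ∧
      ((∑ i, a i * Real.log (a i / b i)) = 0 ↔ ∀ i, a i = b i) := by
  have hne : ∀ i, a i ≠ 0 := fun i => (ha i).ne'
  have ht : ∀ i, a i * (b i / a i) = b i := by
    intro i; rw [mul_comm]; exact div_mul_cancel₀ _ (hne i)
  have h2 : ∀ i, a i * Real.log (a i / b i) = -(a i * Real.log (b i / a i)) := by
    intro i
    have : Real.log (a i / b i) = -Real.log (b i / a i) := by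
      rw [← Real.log_inv, inv_div]
    rw [this]; ring
  have key : ∀ i, a i - b i ≤ a i * Real.log (a i / b i) := by
    intro i
    have h1 : Real.log (b i / a i) ≤ b i / a i - 1 :=
      Real.log_le_sub_one_of_pos (div_pos (hb i) (ha i))
    have h3 := mul_le_mul_of_nonneg_left h1 (ha i).le
    rw [mul_sub, ht, mul_one] at h3
    rw [h2]; linarith
  have hzero : ∑ i, (a i - b i) = 0 := by
    rw [Finset.sum_sub_distrib, hsa, hsb]; ring
  have h0 : 0 ≤ ∑ i, a i * Real.log (a i / b i) := by
    calc (0:ℝ) = ∑ i, (a i - b i) := hzero.symm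
    _ ≤ _ := Finset.sum_le_sum (fun i _ => key i)
  refine ⟨h0, ?_⟩
  constructor
  · intro hKL
    have hsum0 : ∑ i, (a i * Real.log (a i / b i) - (a i - b i)) = 0 := by
      rw [Finset.sum_sub_distrib, hzero, hKL]; ring
    have heach := (Finset.sum_eq_zero_iff_of_nonneg
      (fun i _ => by linarith [key i])).mp hsum0
    intro i
    by_contra hneq
    have hba : b i / a i ≠ 1 := by
      intro h
      exact hneq ((div_eq_one_iff_eq (hne i)).mp h).symm
    have h1 : Real.log (b i / a i) < b i / a i - 1 :=
      Real.log_lt_sub_one_of_pos (div_pos (hb i) (ha i)) hba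
    have h3 := mul_lt_mul_of_pos_left h1 (ha i)
    rw [mul_sub, ht, mul_one] at h3
    have := heach i (Finset.mem_univ i)
    rw [h2 i] at this
    linarith
  · intro h
    have : ∀ i, a i * Real.log (a i / b i) = 0 := by
      intro i
      rw [h i, div_self (hb i).ne', Real.log_one, mul_zero]
    simp [this]

/-- For any strictly positive joint `p` on `V × V` and any `w2`,
the KL divergence from `p_{1|2}(·|w2)` to the MRF conditional `q_{1|2}(·|w2)` is
nonnegative, with equality iff `p_{2|1}(w2|w)` is constant in `w`. -/
theorem kl_to_mrf_conditional_nonneg_eq_iff_const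
    {V : Type*} [Fintype V] [Nonempty V] (p : V → V → ℝ)
    (hpos : ∀ w1 w2, 0 < p w1 w2)
    (hsum : (∑ w1 : V, ∑ w2 : V, p w1 w2) = 1) (w2 : V) :
    let p1 : V → ℝ := fun w1 => ∑ w' : V, p w1 w'
    let p2 : V → ℝ := fun v => ∑ w' : V, p w' v
    let p12 : V → V → ℝ := fun a b => p a b / p2 b
    let p21 : V → V → ℝ := fun b a => p a b / p1 a
    let Z : ℝ := ∑ a : V, ∑ b : V, p12 a b * p21 b a
    let q : V → V → ℝ := fun a b => p12 a b * p21 b a / Z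
    let q12 : V → V → ℝ := fun a b => q a b / ∑ w' : V, q w' b
    let KL : ℝ := ∑ w : V, p12 w w2 * Real.log (p12 w w2 / q12 w w2)
    0 ≤ KL ∧ (KL = 0 ↔ ∀ w w' : V, p21 w2 w = p21 w2 w') := by
  intro p1 p2 p12 p21 Z q q12 KL
  have hp1 : ∀ a, 0 < p1 a := fun a => Finset.sum_pos (fun i _ => hpos a i) Finset.univ_nonempty
  have hp2 : ∀ b, 0 < p2 b := fun b => Finset.sum_pos (fun i _ => hpos i b) Finset.univ_nonempty
  have hp12 : ∀ a b, 0 < p12 a b := fun a b => div_pos (hpos a b) (hp2 b)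
  have hp21 : ∀ b a, 0 < p21 b a := fun b a => div_pos (hpos a b) (hp1 a)
  have hZ : 0 < Z :=
    Finset.sum_pos (fun a _ => Finset.sum_pos (fun b _ => mul_pos (hp12 a b) (hp21 b a))
      Finset.univ_nonempty) Finset.univ_nonempty
  have hq : ∀ a b, 0 < q a b := fun a b => div_pos (mul_pos (hp12 a b) (hp21 b a)) hZ
  have hT : 0 < ∑ w' : V, q w' w2 :=
    Finset.sum_pos (fun i _ => hq i w2) Finset.univ_nonempty
  have hq12 : ∀ a, 0 < q12 a w2 := fun a => div_pos (hq a w2) hT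
  have hsa : ∑ w : V, p12 w w2 = 1 := by
    rw [← Finset.sum_div]
    exact div_self (hp2 w2).ne'
  have hsb : ∑ w : V, q12 w w2 = 1 := by
    rw [← Finset.sum_div]
    exact div_self hT.ne'
  obtain ⟨h0, hiff⟩ := gibbs_aux (fun w => p12 w w2) (fun w => q12 w w2)
    (fun w => hp12 w w2) (fun w => hq12 w) hsa hsb
  refine ⟨h0, hiff.trans ?_⟩
  -- (∀ w, p12 w w2 = q12 w w2) ↔ (∀ w w', p21 w2 w = p21 w2 w')
  set T : ℝ := ∑ w' : V, q w' w2 with hTdef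
  have hkey : ∀ w, (p12 w w2 = q12 w w2 ↔ p21 w2 w = Z * T) := by
    intro w
    have hq12eq : q12 w w2 = p12 w w2 * p21 w2 w / (Z * T) := by
      show q w w2 / T = _
      show p12 w w2 * p21 w2 w / Z / T = _
      rw [div_div]
    rw [hq12eq, eq_div_iff (mul_pos hZ hT).ne']
    constructor
    · intro h
      exact (mul_left_cancel₀ (hp12 w w2).ne' h).symm
    · intro h; rw [h]
  constructor
  · intro h w w'
    rw [(hkey w).mp (h w), (hkey w').mp (h w')]
  · intro h w
    rw [hkey w]
    -- T = ∑ q w' w2 = ∑ p12 w' w2 * p21 w2 w' / Z = p21 w2 w / Z since constant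
    have hTval : T = p21 w2 w / Z := by
      rw [hTdef]
      have : ∀ w' : V, q w' w2 = p12 w' w2 * (p21 w2 w / Z) := by
        intro w'
        show p12 w' w2 * p21 w2 w' / Z = _
        rw [← h w w']
        ring
      rw [Finset.sum_congr rfl (fun w' _ => this w'), ← Finset.sum_mul, hsa, one_mul]
    rw [hTval, mul_comm Z, div_mul_cancel₀ _ hZ.ne']
end

section
/- (Hammersley–Clifford–Besag for two variables) Let p be a strictly positive joint distribution on V1 × V2 with conditionals p_{1|2} and p_{2|1}. Fix any pivot (w1', w2') ∈ V1 × V2. Then the distribution defined by q(w1, w2) ∝ [p_{1|2}(w1|w2)/p_{1|2}(w1'|w2)] · [p_{2|1}(w2|w1')/p_{2|1}(w2'|w1')] equals p exactly. -/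
/-- Hammersley–Clifford–Besag for two variables: for a strictly
positive joint `p` on `V1 × V2` and any pivot `(w1', w2')`, the normalization of
`(w1,w2) ↦ [p_{1|2}(w1|w2)/p_{1|2}(w1'|w2)] · [p_{2|1}(w2|w1')/p_{2|1}(w2'|w1')]`
recovers `p` exactly. -/
theorem hcb_two_variable_recovery
    {V1 V2 : Type*} [Fintype V1] [Fintype V2] [Nonempty V1] [Nonempty V2]
    (p : V1 → V2 → ℝ) (hpos : ∀ w1 w2, 0 < p w1 w2)
    (hsum : (∑ w1 : V1, ∑ w2 : V2, p w1 w2) = 1) (w1' : V1) (w2' : V2) :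
    let p12 : V1 → V2 → ℝ := fun a b => p a b / ∑ w : V1, p w b
    let p21 : V2 → V1 → ℝ := fun b a => p a b / ∑ w : V2, p a w
    let r : V1 → V2 → ℝ :=
      fun a b => (p12 a b / p12 w1' b) * (p21 b w1' / p21 w2' w1')
    let q : V1 → V2 → ℝ := fun a b => r a b / ∑ x : V1, ∑ y : V2, r x y
    ∀ w1 w2, q w1 w2 = p w1 w2 := by
  intro p12 p21 r q w1 w2
  have hcol : ∀ b, (0:ℝ) < ∑ w : V1, p w b := fun b =>
    Finset.sum_pos (fun w _ => hpos w b) Finset.univ_nonempty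
  have hrow : ∀ a, (0:ℝ) < ∑ w : V2, p a w := fun a =>
    Finset.sum_pos (fun w _ => hpos a w) Finset.univ_nonempty
  have hr : ∀ a b, r a b = p a b / p w1' w2' := by
    intro a b
    show (p a b / ∑ w : V1, p w b) / (p w1' b / ∑ w : V1, p w b) *
      ((p w1' b / ∑ w : V2, p w1' w) / (p w1' w2' / ∑ w : V2, p w1' w)) = _
    have h1 := (hcol b).ne'
    have h2 := (hrow w1').ne'
    have h3 := (hpos w1' b).ne'
    have h4 := (hpos w1' w2').ne'
    field_simp
  show r w1 w2 / (∑ x : V1, ∑ y : V2, r x y) = p w1 w2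
  have hsumr : (∑ x : V1, ∑ y : V2, r x y) = 1 / p w1' w2' := by
    simp only [hr, div_eq_mul_inv, ← Finset.sum_mul, hsum]
  rw [hr, hsumr]
  have h := (hpos w1' w2').ne'
  field_simp
end

section
/- If p_{1|2}(w1|w2)/p_{2|1}(w2|w1) = f(w1)·g(w2) for strictly positive functions f, g on finite sets V1, V2, then the joint distribution defined by p(w1,w2) ∝ f(w1)·p_{2|1}(w2|w1) has conditionals exactly equal to p_{1|2} and p_{2|1}. -/
/-- If `q12(w1|w2)/q21(w2|w1) = f(w1)·g(w2)` for strictly positive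
`f, g`, then the joint `p(w1,w2) ∝ f(w1)·q21(w2|w1)` has conditionals exactly
`q12` and `q21`. -/
theorem factorized_ratio_gives_compatible_joint
    {V1 V2 : Type*} [Fintype V1] [Fintype V2] [Nonempty V1] [Nonempty V2]
    (q12 : V1 → V2 → ℝ) (q21 : V2 → V1 → ℝ)
    (h12pos : ∀ w1 w2, 0 < q12 w1 w2) (h12sum : ∀ w2, (∑ w1 : V1, q12 w1 w2) = 1)
    (h21pos : ∀ w2 w1, 0 < q21 w2 w1) (h21sum : ∀ w1, (∑ w2 : V2, q21 w2 w1) = 1)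
    (f : V1 → ℝ) (g : V2 → ℝ) (hf : ∀ w1, 0 < f w1) (hg : ∀ w2, 0 < g w2)
    (hfactor : ∀ w1 w2, q12 w1 w2 / q21 w2 w1 = f w1 * g w2) :
    let Z : ℝ := ∑ x : V1, ∑ y : V2, f x * q21 y x
    let p : V1 → V2 → ℝ := fun w1 w2 => f w1 * q21 w2 w1 / Z
    (∀ w1 w2, p w1 w2 / (∑ w : V1, p w w2) = q12 w1 w2) ∧
    (∀ w1 w2, p w1 w2 / (∑ w : V2, p w1 w) = q21 w2 w1) := by
  intro Z p
  have key : ∀ w1 w2, q12 w1 w2 = f w1 * g w2 * q21 w2 w1 := by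
    intro w1 w2
    have h := hfactor w1 w2
    have hq : q21 w2 w1 ≠ 0 := (h21pos w2 w1).ne'
    field_simp at h
    linarith [h]
  have hZpos : 0 < Z := by
    apply Finset.sum_pos
    · intro x _
      apply Finset.sum_pos
      · intro y _
        exact mul_pos (hf x) (h21pos y x)
      · exact Finset.univ_nonempty
    · exact Finset.univ_nonempty
  have hZ : Z ≠ 0 := hZpos.ne'
  have hcol : ∀ w2, (∑ w : V1, f w * q21 w2 w) = 1 / g w2 := by
    intro w2
    have : g w2 * ∑ w : V1, f w * q21 w2 w = 1 := by
      rw [Finset.mul_sum]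
      rw [← h12sum w2]
      apply Finset.sum_congr rfl
      intro w _
      rw [key w w2]; ring
    rw [eq_div_iff (hg w2).ne']
    linarith [this]
  constructor
  · intro w1 w2
    have hsum : (∑ w : V1, p w w2) = (1 / g w2) / Z := by
      show (∑ w : V1, f w * q21 w2 w / Z) = (1 / g w2) / Z
      rw [← Finset.sum_div, hcol w2]
    rw [hsum, key w1 w2]
    simp only [p]
    have hg2 : g w2 ≠ 0 := (hg w2).ne'
    field_simp
  · intro w1 w2
    have hsum : (∑ w : V2, p w1 w) = f w1 / Z := by
      simp only [p, ← Finset.sum_div, ← Finset.mul_sum, h21sum w1, mul_one]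
    rw [hsum]
    simp only [p]
    have hf1 : f w1 ≠ 0 := (hf w1).ne'
    field_simp
end

section
/- Let q_{1|2} and q_{2|1} be strictly positive conditional families on finite sets V1, V2. If they are compatible with a strictly positive joint p, then p is the unique minimizer (value zero) of the objective J(μ) = Σ_{w2} KL(q_{1|2}(·|w2) ‖ μ_{1|2}(·|w2)) + Σ_{w1} KL(q_{2|1}(·|w1) ‖ μ_{2|1}(·|w1)) over strictly positive joint distributions μ on V1 × V2. -/
lemma gibbs_aux_s8 {ι : Type*} [Fintype ι] (q m : ι → ℝ)
    (hq : ∀ i, 0 < q i) (hm : ∀ i, 0 < m i)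
    (hqs : ∑ i, q i = 1) (hms : ∑ i, m i = 1) :
    0 ≤ ∑ i, q i * Real.log (q i / m i) ∧
    ((∑ i, q i * Real.log (q i / m i)) = 0 → ∀ i, q i = m i) := by
  have h2 : ∀ i, Real.log (q i / m i) = - Real.log (m i / q i) := by
    intro i
    rw [Real.log_div (hq i).ne' (hm i).ne', Real.log_div (hm i).ne' (hq i).ne']; ring
  have h3 : ∀ i, q i * (m i / q i - 1) = m i - q i := by
    intro i; rw [mul_sub, mul_div_cancel₀ _ (hq i).ne', mul_one]
  have key : ∀ i, q i - m i ≤ q i * Real.log (q i / m i) := by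
    intro i
    have h1 : Real.log (m i / q i) ≤ m i / q i - 1 :=
      Real.log_le_sub_one_of_pos (div_pos (hm i) (hq i))
    have h4 := mul_le_mul_of_nonneg_left h1 (hq i).le
    rw [h3 i] at h4
    rw [h2 i, mul_neg]; linarith
  have keystrict : ∀ i, q i ≠ m i → q i - m i < q i * Real.log (q i / m i) := by
    intro i hne
    have h1 : Real.log (m i / q i) < m i / q i - 1 := by
      apply Real.log_lt_sub_one_of_pos (div_pos (hm i) (hq i))
      intro h
      exact hne ((div_eq_one_iff_eq (hq i).ne').mp h).symm
    have h4 := (mul_lt_mul_iff_right₀ (hq i)).mpr h1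
    rw [h3 i] at h4
    rw [h2 i, mul_neg]; linarith
  have hsum : ∑ i, (q i - m i) = 0 := by
    rw [Finset.sum_sub_distrib, hqs, hms]; ring
  constructor
  · calc (0:ℝ) = ∑ i, (q i - m i) := hsum.symm
      _ ≤ _ := Finset.sum_le_sum (fun i _ => key i)
  · intro h0
    by_contra hne
    push_neg at hne
    obtain ⟨i0, hi0⟩ := hne
    have : ∑ i, (q i - m i) < ∑ i, q i * Real.log (q i / m i) :=
      Finset.sum_lt_sum (fun i _ => key i) ⟨i0, Finset.mem_univ i0, keystrict i0 hi0⟩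
    rw [hsum, h0] at this
    exact lt_irrefl 0 this

/-- If strictly positive conditional families `q12, q21` are
compatible with a strictly positive joint `p`, then `p` is the unique minimizer
(with value zero) of
`J(μ) = Σ_{w2} KL(q12(·|w2) ‖ μ_{1|2}(·|w2)) + Σ_{w1} KL(q21(·|w1) ‖ μ_{2|1}(·|w1))`
over strictly positive joints `μ` on `V1 × V2`. -/
theorem compatible_joint_unique_minimizer_of_AG_objective
    {V1 V2 : Type*} [Fintype V1] [Fintype V2] [Nonempty V1] [Nonempty V2]
    (q12 : V1 → V2 → ℝ) (q21 : V2 → V1 → ℝ)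
    (h12pos : ∀ w1 w2, 0 < q12 w1 w2) (h21pos : ∀ w2 w1, 0 < q21 w2 w1)
    (p : V1 → V2 → ℝ) (hppos : ∀ w1 w2, 0 < p w1 w2)
    (hpsum : (∑ w1 : V1, ∑ w2 : V2, p w1 w2) = 1)
    (hp12 : ∀ w1 w2, p w1 w2 / (∑ w : V1, p w w2) = q12 w1 w2)
    (hp21 : ∀ w1 w2, p w1 w2 / (∑ w : V2, p w1 w) = q21 w2 w1) :
    let J : (V1 → V2 → ℝ) → ℝ := fun μ =>
      (∑ w2 : V2, ∑ w1 : V1, q12 w1 w2 *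
        Real.log (q12 w1 w2 / (μ w1 w2 / (∑ w : V1, μ w w2)))) +
      (∑ w1 : V1, ∑ w2 : V2, q21 w2 w1 *
        Real.log (q21 w2 w1 / (μ w1 w2 / (∑ w : V2, μ w1 w))))
    J p = 0 ∧
    ∀ μ : V1 → V2 → ℝ, (∀ w1 w2, 0 < μ w1 w2) →
      (∑ w1 : V1, ∑ w2 : V2, μ w1 w2) = 1 →
      0 ≤ J μ ∧ (J μ = 0 → μ = p) := by
  intro J
  -- column sums of positive joints are positive
  have colpos : ∀ (μ : V1 → V2 → ℝ), (∀ w1 w2, 0 < μ w1 w2) →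
      ∀ w2, 0 < ∑ w : V1, μ w w2 := fun μ hμ w2 =>
    Finset.sum_pos (fun w _ => hμ w w2) Finset.univ_nonempty
  have rowpos : ∀ (μ : V1 → V2 → ℝ), (∀ w1 w2, 0 < μ w1 w2) →
      ∀ w1, 0 < ∑ w : V2, μ w1 w := fun μ hμ w1 =>
    Finset.sum_pos (fun w _ => hμ w1 w) Finset.univ_nonempty
  -- conditionals sum to 1
  have condcol : ∀ (μ : V1 → V2 → ℝ), (∀ w1 w2, 0 < μ w1 w2) →
      ∀ w2, ∑ w1 : V1, μ w1 w2 / (∑ w : V1, μ w w2) = 1 := by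
    intro μ hμ w2
    rw [← Finset.sum_div, div_self (colpos μ hμ w2).ne']
  have condrow : ∀ (μ : V1 → V2 → ℝ), (∀ w1 w2, 0 < μ w1 w2) →
      ∀ w1, ∑ w2 : V2, μ w1 w2 / (∑ w : V2, μ w1 w) = 1 := by
    intro μ hμ w1
    rw [← Finset.sum_div, div_self (rowpos μ hμ w1).ne']
  have hq12sum : ∀ w2, ∑ w1 : V1, q12 w1 w2 = 1 := by
    intro w2
    calc ∑ w1 : V1, q12 w1 w2 = ∑ w1 : V1, p w1 w2 / (∑ w : V1, p w w2) := by
          simp_rw [hp12]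
      _ = 1 := condcol p hppos w2
  have hq21sum : ∀ w1, ∑ w2 : V2, q21 w2 w1 = 1 := by
    intro w1
    calc ∑ w2 : V2, q21 w2 w1 = ∑ w2 : V2, p w1 w2 / (∑ w : V2, p w1 w) := by
          simp_rw [hp21]
      _ = 1 := condrow p hppos w1
  constructor
  · -- J p = 0
    show (_ : ℝ) + _ = 0
    have e1 : ∀ w2 w1, q12 w1 w2 *
        Real.log (q12 w1 w2 / (p w1 w2 / (∑ w : V1, p w w2))) = 0 := by
      intro w2 w1
      rw [hp12, div_self (h12pos w1 w2).ne', Real.log_one, mul_zero]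
    have e2 : ∀ w1 w2, q21 w2 w1 *
        Real.log (q21 w2 w1 / (p w1 w2 / (∑ w : V2, p w1 w))) = 0 := by
      intro w1 w2
      rw [hp21, div_self (h21pos w2 w1).ne', Real.log_one, mul_zero]
    rw [Finset.sum_eq_zero (fun w2 _ => Finset.sum_eq_zero (fun w1 _ => e1 w2 w1)),
        Finset.sum_eq_zero (fun w1 _ => Finset.sum_eq_zero (fun w2 _ => e2 w1 w2)),
        add_zero]
  · intro μ hμpos hμsum
    -- apply Gibbs on each column / row
    have gcol : ∀ w2, 0 ≤ ∑ w1 : V1, q12 w1 w2 *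
          Real.log (q12 w1 w2 / (μ w1 w2 / (∑ w : V1, μ w w2))) ∧
        ((∑ w1 : V1, q12 w1 w2 *
          Real.log (q12 w1 w2 / (μ w1 w2 / (∑ w : V1, μ w w2)))) = 0 →
          ∀ w1, q12 w1 w2 = μ w1 w2 / (∑ w : V1, μ w w2)) := by
      intro w2
      exact gibbs_aux_s8 (fun w1 => q12 w1 w2)
        (fun w1 => μ w1 w2 / (∑ w : V1, μ w w2))
        (fun w1 => h12pos w1 w2)
        (fun w1 => div_pos (hμpos w1 w2) (colpos μ hμpos w2))
        (hq12sum w2) (condcol μ hμpos w2)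
    have grow : ∀ w1, 0 ≤ ∑ w2 : V2, q21 w2 w1 *
          Real.log (q21 w2 w1 / (μ w1 w2 / (∑ w : V2, μ w1 w))) ∧
        ((∑ w2 : V2, q21 w2 w1 *
          Real.log (q21 w2 w1 / (μ w1 w2 / (∑ w : V2, μ w1 w)))) = 0 →
          ∀ w2, q21 w2 w1 = μ w1 w2 / (∑ w : V2, μ w1 w)) := by
      intro w1
      exact gibbs_aux_s8 (fun w2 => q21 w2 w1)
        (fun w2 => μ w1 w2 / (∑ w : V2, μ w1 w))
        (fun w2 => h21pos w2 w1)
        (fun w2 => div_pos (hμpos w1 w2) (rowpos μ hμpos w1))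
        (hq21sum w1) (condrow μ hμpos w1)
    have hA : 0 ≤ ∑ w2 : V2, ∑ w1 : V1, q12 w1 w2 *
        Real.log (q12 w1 w2 / (μ w1 w2 / (∑ w : V1, μ w w2))) :=
      Finset.sum_nonneg (fun w2 _ => (gcol w2).1)
    have hB : 0 ≤ ∑ w1 : V1, ∑ w2 : V2, q21 w2 w1 *
        Real.log (q21 w2 w1 / (μ w1 w2 / (∑ w : V2, μ w1 w))) :=
      Finset.sum_nonneg (fun w1 _ => (grow w1).1)
    constructor
    · exact add_nonneg hA hB
    · intro hJ0
      have hA0 : (∑ w2 : V2, ∑ w1 : V1, q12 w1 w2 *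
          Real.log (q12 w1 w2 / (μ w1 w2 / (∑ w : V1, μ w w2)))) = 0 := by
        have : (∑ w2 : V2, ∑ w1 : V1, q12 w1 w2 *
            Real.log (q12 w1 w2 / (μ w1 w2 / (∑ w : V1, μ w w2)))) +
            (∑ w1 : V1, ∑ w2 : V2, q21 w2 w1 *
            Real.log (q21 w2 w1 / (μ w1 w2 / (∑ w : V2, μ w1 w)))) = 0 := hJ0
        linarith
      have hB0 : (∑ w1 : V1, ∑ w2 : V2, q21 w2 w1 *
          Real.log (q21 w2 w1 / (μ w1 w2 / (∑ w : V2, μ w1 w)))) = 0 := by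
        have : (∑ w2 : V2, ∑ w1 : V1, q12 w1 w2 *
            Real.log (q12 w1 w2 / (μ w1 w2 / (∑ w : V1, μ w w2)))) +
            (∑ w1 : V1, ∑ w2 : V2, q21 w2 w1 *
            Real.log (q21 w2 w1 / (μ w1 w2 / (∑ w : V2, μ w1 w)))) = 0 := hJ0
        linarith
      -- each inner sum is zero
      have hcol0 : ∀ w2, (∑ w1 : V1, q12 w1 w2 *
          Real.log (q12 w1 w2 / (μ w1 w2 / (∑ w : V1, μ w w2)))) = 0 := by
        intro w2
        have := (Finset.sum_eq_zero_iff_of_nonneg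
          (fun w2 _ => (gcol w2).1)).mp hA0
        exact this w2 (Finset.mem_univ w2)
      have hrow0 : ∀ w1, (∑ w2 : V2, q21 w2 w1 *
          Real.log (q21 w2 w1 / (μ w1 w2 / (∑ w : V2, μ w1 w)))) = 0 := by
        intro w1
        have := (Finset.sum_eq_zero_iff_of_nonneg
          (fun w1 _ => (grow w1).1)).mp hB0
        exact this w1 (Finset.mem_univ w1)
      -- μ has the same conditionals as p
      have hc12 : ∀ w1 w2, μ w1 w2 / (∑ w : V1, μ w w2) = q12 w1 w2 :=
        fun w1 w2 => ((gcol w2).2 (hcol0 w2) w1).symm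
      have hc21 : ∀ w1 w2, μ w1 w2 / (∑ w : V2, μ w1 w) = q21 w2 w1 :=
        fun w1 w2 => ((grow w1).2 (hrow0 w1) w2).symm
      -- uniqueness
      have hCpos := colpos μ hμpos
      have hCppos := colpos p hppos
      have hRpos := rowpos μ hμpos
      have hRppos := rowpos p hppos
      have e12 : ∀ w1 w2, μ w1 w2 * (∑ w : V1, p w w2) =
          p w1 w2 * (∑ w : V1, μ w w2) := by
        intro w1 w2
        have h := (hc12 w1 w2).trans (hp12 w1 w2).symm
        exact (div_eq_div_iff (hCpos w2).ne' (hCppos w2).ne').mp h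
      have e21 : ∀ w1 w2, μ w1 w2 * (∑ w : V2, p w1 w) =
          p w1 w2 * (∑ w : V2, μ w1 w) := by
        intro w1 w2
        have h := (hc21 w1 w2).trans (hp21 w1 w2).symm
        exact (div_eq_div_iff (hRpos w1).ne' (hRppos w1).ne').mp h
      obtain ⟨w0⟩ := (inferInstance : Nonempty V1)
      have hCR : ∀ w2, (∑ w : V1, μ w w2) * (∑ w : V2, p w0 w) =
          (∑ w : V1, p w w2) * (∑ w : V2, μ w0 w) := by
        intro w2
        have h1 := e12 w0 w2
        have h2 := e21 w0 w2
        have hmul : p w0 w2 * ((∑ w : V1, μ w w2) * (∑ w : V2, p w0 w)) =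
            p w0 w2 * ((∑ w : V1, p w w2) * (∑ w : V2, μ w0 w)) := by
          linear_combination (∑ w : V1, p w w2) * h2 - (∑ w : V2, p w0 w) * h1
        exact mul_left_cancel₀ (hppos w0 w2).ne' hmul
      have key : ∀ w1 w2, μ w1 w2 * (∑ w : V2, p w0 w) =
          p w1 w2 * (∑ w : V2, μ w0 w) := by
        intro w1 w2
        have h1 := e12 w1 w2
        have h2 := hCR w2
        have hmul : (∑ w : V1, p w w2) * (μ w1 w2 * (∑ w : V2, p w0 w)) =
            (∑ w : V1, p w w2) * (p w1 w2 * (∑ w : V2, μ w0 w)) := by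
          linear_combination (∑ w : V2, p w0 w) * h1 + p w1 w2 * h2
        exact mul_left_cancel₀ (hCppos w2).ne' hmul
      have hsums : (∑ w : V2, p w0 w) = (∑ w : V2, μ w0 w) := by
        have hs : (∑ w1 : V1, ∑ w2 : V2, μ w1 w2 * (∑ w : V2, p w0 w)) =
            ∑ w1 : V1, ∑ w2 : V2, p w1 w2 * (∑ w : V2, μ w0 w) :=
          Finset.sum_congr rfl (fun w1 _ => Finset.sum_congr rfl
            (fun w2 _ => key w1 w2))
        simp_rw [← Finset.sum_mul] at hs
        rw [hμsum, hpsum, one_mul, one_mul] at hs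
        exact hs
      funext w1 w2
      have h := key w1 w2
      rw [hsums] at h
      exact mul_right_cancel₀ (hRpos w0).ne' h
end

section
/- A strictly positive joint distribution on a finite product V1 × V2 is uniquely determined by its two conditional families: if p and p' are strictly positive joints on V1 × V2 with p_{1|2} = p'_{1|2} and p_{2|1} = p'_{2|1}, then p = p'. -/
/-- A strictly positive joint on a finite product `V1 × V2` is
uniquely determined by its two conditional families. -/
theorem strictly_positive_joint_determined_by_conditionals
    {V1 V2 : Type*} [Fintype V1] [Fintype V2] [Nonempty V1] [Nonempty V2]
    (p p' : V1 → V2 → ℝ)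
    (hp : ∀ w1 w2, 0 < p w1 w2) (hp' : ∀ w1 w2, 0 < p' w1 w2)
    (hsum : (∑ w1 : V1, ∑ w2 : V2, p w1 w2) = 1)
    (hsum' : (∑ w1 : V1, ∑ w2 : V2, p' w1 w2) = 1)
    (h12 : ∀ w1 w2, p w1 w2 / (∑ w : V1, p w w2) = p' w1 w2 / (∑ w : V1, p' w w2))
    (h21 : ∀ w1 w2, p w1 w2 / (∑ w : V2, p w1 w) = p' w1 w2 / (∑ w : V2, p' w1 w)) :
    p = p' := by
  obtain ⟨b⟩ := ‹Nonempty V2›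
  have hS : ∀ w2, 0 < ∑ w : V1, p w w2 :=
    fun w2 => Finset.sum_pos (fun i _ => hp i w2) Finset.univ_nonempty
  have hS' : ∀ w2, 0 < ∑ w : V1, p' w w2 :=
    fun w2 => Finset.sum_pos (fun i _ => hp' i w2) Finset.univ_nonempty
  have hT : ∀ w1, 0 < ∑ w : V2, p w1 w :=
    fun w1 => Finset.sum_pos (fun i _ => hp w1 i) Finset.univ_nonempty
  have hT' : ∀ w1, 0 < ∑ w : V2, p' w1 w :=
    fun w1 => Finset.sum_pos (fun i _ => hp' w1 i) Finset.univ_nonempty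
  -- ratio form
  have key1 : ∀ w1 w2, p w1 w2 =
      (∑ w : V1, p w w2) / (∑ w : V1, p' w w2) * p' w1 w2 := by
    intro w1 w2
    have h := h12 w1 w2
    rw [div_eq_div_iff (hS w2).ne' (hS' w2).ne'] at h
    rw [div_mul_eq_mul_div, eq_div_iff (hS' w2).ne']
    linarith [h]
  have key2 : ∀ w1 w2, p w1 w2 =
      (∑ w : V2, p w1 w) / (∑ w : V2, p' w1 w) * p' w1 w2 := by
    intro w1 w2
    have h := h21 w1 w2
    rw [div_eq_div_iff (hT w1).ne' (hT' w1).ne'] at h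
    rw [div_mul_eq_mul_div, eq_div_iff (hT' w1).ne']
    linarith [h]
  -- the column ratio is independent of the column
  have hconst : ∀ w2, (∑ w : V1, p w w2) / (∑ w : V1, p' w w2) =
      (∑ w : V1, p w b) / (∑ w : V1, p' w b) := by
    intro w2
    obtain ⟨a⟩ := ‹Nonempty V1›
    have h1 := (key1 a w2).symm.trans (key2 a w2)
    have h2 := (key1 a b).symm.trans (key2 a b)
    have hne2 : p' a w2 ≠ 0 := (hp' a w2).ne'
    have hneb : p' a b ≠ 0 := (hp' a b).ne'
    have e1 : (∑ w : V1, p w w2) / (∑ w : V1, p' w w2) =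
        (∑ w : V2, p a w) / (∑ w : V2, p' a w) :=
      mul_right_cancel₀ hne2 h1
    have e2 : (∑ w : V1, p w b) / (∑ w : V1, p' w b) =
        (∑ w : V2, p a w) / (∑ w : V2, p' a w) :=
      mul_right_cancel₀ hneb h2
    rw [e1, e2]
  set c : ℝ := (∑ w : V1, p w b) / (∑ w : V1, p' w b) with hc
  have hpc : ∀ w1 w2, p w1 w2 = c * p' w1 w2 := by
    intro w1 w2
    rw [key1 w1 w2, hconst w2]
  have hc1 : c = 1 := by
    have : (∑ w1 : V1, ∑ w2 : V2, p w1 w2) = c * ∑ w1 : V1, ∑ w2 : V2, p' w1 w2 := by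
      simp_rw [hpc, ← Finset.mul_sum]
    rw [hsum, hsum', mul_one] at this
    exact this.symm
  funext w1 w2
  rw [hpc w1 w2, hc1, one_mul]
end

section
/- For a strictly positive joint p on V1 × V2, the MRF construction q(w1,w2) ∝ p_{1|2}(w1|w2)·p_{2|1}(w2|w1) equals p itself if and only if p(w1,w2)·p_1(w1)·p_2(w2) is proportional to p(w1,w2)^2, i.e., iff p(w1,w2) = c·p_1(w1)·p_2(w2) for some constant c on the support — equivalently iff p is the product of its marginals (w1 and w2 are independent under p). -/
/-- For a strictly positive joint `p` on `V1 × V2`, the MRF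
construction `q(w1,w2) = p(w1,w2)² / (p_1(w1)·p_2(w2)·Z)` equals `p` iff `p` is
the product of its marginals (i.e., the two coordinates are independent). -/
theorem mrf_equals_joint_iff_independent
    {V1 V2 : Type*} [Fintype V1] [Fintype V2] [Nonempty V1] [Nonempty V2]
    (p : V1 → V2 → ℝ) (hpos : ∀ w1 w2, 0 < p w1 w2)
    (hsum : (∑ w1 : V1, ∑ w2 : V2, p w1 w2) = 1) :
    let p1 : V1 → ℝ := fun w1 => ∑ w : V2, p w1 w
    let p2 : V2 → ℝ := fun w2 => ∑ w : V1, p w w2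
    let Z : ℝ := ∑ x : V1, ∑ y : V2, p x y ^ 2 / (p1 x * p2 y)
    let q : V1 → V2 → ℝ := fun w1 w2 => p w1 w2 ^ 2 / (p1 w1 * p2 w2 * Z)
    (∀ w1 w2, q w1 w2 = p w1 w2) ↔ (∀ w1 w2, p w1 w2 = p1 w1 * p2 w2) := by
  intro p1 p2 Z q
  have hp1 : ∀ w1, 0 < p1 w1 := fun w1 =>
    Finset.sum_pos (fun w _ => hpos w1 w) Finset.univ_nonempty
  have hp2 : ∀ w2, 0 < p2 w2 := fun w2 =>
    Finset.sum_pos (fun w _ => hpos w w2) Finset.univ_nonempty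
  have hs1 : (∑ w1 : V1, p1 w1) = 1 := hsum
  have hs2 : (∑ w2 : V2, p2 w2) = 1 := by
    rw [show (∑ w2 : V2, p2 w2) = ∑ w2 : V2, ∑ w1 : V1, p w1 w2 from rfl,
      Finset.sum_comm]; exact hsum
  have hZpos : 0 < Z := by
    apply Finset.sum_pos (fun x _ => ?_) Finset.univ_nonempty
    apply Finset.sum_pos (fun y _ => ?_) Finset.univ_nonempty
    exact div_pos (pow_pos (hpos x y) 2) (mul_pos (hp1 x) (hp2 y))
  constructor
  · intro h
    have key : ∀ a b, p a b = p1 a * p2 b * Z := by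
      intro a b
      have hd := h a b
      have hne : p1 a * p2 b * Z ≠ 0 := (mul_pos (mul_pos (hp1 a) (hp2 b)) hZpos).ne'
      rw [div_eq_iff hne] at hd
      have : p a b * p a b = p a b * (p1 a * p2 b * Z) := by
        rw [← hd]; ring
      exact mul_left_cancel₀ (hpos a b).ne' this
    have hZ1 : Z = 1 := by
      have h1 : (1:ℝ) = (∑ a : V1, ∑ b : V2, p1 a * p2 b * Z) := by
        rw [← hsum]
        exact Finset.sum_congr rfl fun a _ =>
          Finset.sum_congr rfl fun b _ => key a b
      have h2 : (∑ a : V1, ∑ b : V2, p1 a * p2 b * Z)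
          = (∑ a : V1, p1 a) * (∑ b : V2, p2 b) * Z := by
        rw [Finset.sum_mul_sum, Finset.sum_mul]
        exact Finset.sum_congr rfl fun a _ => by
          rw [Finset.sum_mul]
      rw [h2, hs1, hs2, one_mul, one_mul] at h1
      linarith
    intro w1 w2
    rw [key w1 w2, hZ1, mul_one]
  · intro h
    have hZ1 : Z = 1 := by
      have : Z = ∑ x : V1, ∑ y : V2, p x y := by
        refine Finset.sum_congr rfl fun x _ => Finset.sum_congr rfl fun y _ => ?_
        rw [h x y, sq, mul_div_assoc,
          div_self (mul_pos (hp1 x) (hp2 y)).ne', mul_one]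
      rw [this, hsum]
    intro w1 w2
    show p w1 w2 ^ 2 / (p1 w1 * p2 w2 * Z) = p w1 w2
    rw [hZ1, mul_one, ← h w1 w2, sq, mul_div_assoc,
      div_self (hpos w1 w2).ne', mul_one]
end

section
/- The Jensen gap log E[X] − E[log X] for a positive random variable X on a finite probability space is zero if and only if X is constant on the support of the measure; consequently, the KL divergence between a true conditional and the MRF conditional, which equals this Jensen gap with X(w) = p_{2|1}(w2|w) under w ∼ p_{1|2}(·|w2), vanishes for all w2 iff p_{2|1}(w2|w1) does not depend on w1. -/
lemma jensen_gap_zero_iff_aux {Ω : Type*} [Fintype Ω] [Nonempty Ω]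
    (m : Ω → ℝ) (hm : ∀ ω, 0 < m ω) (hmsum : (∑ ω : Ω, m ω) = 1)
    (X : Ω → ℝ) (hX : ∀ ω, 0 < X ω) :
    Real.log (∑ ω : Ω, m ω * X ω) - (∑ ω : Ω, m ω * Real.log (X ω)) = 0
      ↔ ∀ ω ω' : Ω, X ω = X ω' := by
  constructor
  · intro h ω ω'
    have key := strictConcaveOn_log_Ioi.eq_of_map_sum_eq
      (t := Finset.univ) (w := m) (p := X)
      (fun i _ => hm i) hmsum (fun i _ => Set.mem_Ioi.2 (hX i)) ?_
    · exact key (Finset.mem_univ ω) (Finset.mem_univ ω')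
    · simp only [smul_eq_mul]
      linarith
  · intro h
    have hx : ∀ ω, X ω = X (Classical.arbitrary Ω) := fun ω => h ω _
    simp_rw [hx, ← Finset.sum_mul, hmsum, one_mul, sub_self]

/-- (i) On a finite probability space with strictly positive mass
function, the Jensen gap `log E[X] − E[log X]` of a positive random variable `X`
vanishes iff `X` is constant; (ii) consequently, for a strictly positive joint
`p` on `V1 × V2`, the KL divergence between the true conditional and the MRF
conditional vanishes for all `w2` iff `p_{2|1}(w2|w1)` does not depend on `w1`. -/
theorem jensen_gap_zero_iff_const_and_mrf_consequence
    {Ω : Type*} [Fintype Ω] [Nonempty Ω]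
    (m : Ω → ℝ) (hm : ∀ ω, 0 < m ω) (hmsum : (∑ ω : Ω, m ω) = 1)
    (X : Ω → ℝ) (hX : ∀ ω, 0 < X ω)
    {V1 V2 : Type*} [Fintype V1] [Fintype V2] [Nonempty V1] [Nonempty V2]
    (p : V1 → V2 → ℝ) (hpos : ∀ w1 w2, 0 < p w1 w2)
    (hsum : (∑ w1 : V1, ∑ w2 : V2, p w1 w2) = 1) :
    (Real.log (∑ ω : Ω, m ω * X ω) - (∑ ω : Ω, m ω * Real.log (X ω)) = 0
      ↔ ∀ ω ω' : Ω, X ω = X ω') ∧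
    (let p1 : V1 → ℝ := fun w1 => ∑ w : V2, p w1 w
     let p2 : V2 → ℝ := fun w2 => ∑ w : V1, p w w2
     let p12 : V1 → V2 → ℝ := fun a b => p a b / p2 b
     let p21 : V2 → V1 → ℝ := fun b a => p a b / p1 a
     let Z : ℝ := ∑ a : V1, ∑ b : V2, p12 a b * p21 b a
     let q : V1 → V2 → ℝ := fun a b => p12 a b * p21 b a / Z
     let q12 : V1 → V2 → ℝ := fun a b => q a b / ∑ w : V1, q w b
     (∀ w2, (∑ w : V1, p12 w w2 * Real.log (p12 w w2 / q12 w w2)) = 0)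
       ↔ ∀ w2 w1 w1', p21 w2 w1 = p21 w2 w1') := by
  refine ⟨jensen_gap_zero_iff_aux m hm hmsum X hX, ?_⟩
  intro p1 p2 p12 p21 Z q q12
  have hp1 : ∀ a, 0 < p1 a := fun a =>
    Finset.sum_pos (fun b _ => hpos a b) Finset.univ_nonempty
  have hp2 : ∀ b, 0 < p2 b := fun b =>
    Finset.sum_pos (fun a _ => hpos a b) Finset.univ_nonempty
  have hp12 : ∀ a b, 0 < p12 a b := fun a b => div_pos (hpos a b) (hp2 b)
  have hp21 : ∀ b a, 0 < p21 b a := fun b a => div_pos (hpos a b) (hp1 a)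
  have hS : ∀ b, 0 < ∑ a : V1, p12 a b * p21 b a := fun b =>
    Finset.sum_pos (fun a _ => mul_pos (hp12 a b) (hp21 b a)) Finset.univ_nonempty
  have hZ : 0 < Z :=
    Finset.sum_pos (fun a _ => Finset.sum_pos
      (fun b _ => mul_pos (hp12 a b) (hp21 b a)) Finset.univ_nonempty) Finset.univ_nonempty
  have hmsum12 : ∀ b, (∑ a : V1, p12 a b) = 1 := by
    intro b
    show (∑ a : V1, p a b / p2 b) = 1
    rw [← Finset.sum_div]
    exact div_self (hp2 b).ne'
  have hq12 : ∀ a b, q12 a b = p12 a b * p21 b a / (∑ a' : V1, p12 a' b * p21 b a') := by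
    intro a b
    show (p12 a b * p21 b a / Z) / (∑ a' : V1, p12 a' b * p21 b a' / Z) = _
    rw [← Finset.sum_div, div_div_div_cancel_right₀ (hc := hZ.ne')]
  have key : ∀ b, (∑ a : V1, p12 a b * Real.log (p12 a b / q12 a b))
      = Real.log (∑ a : V1, p12 a b * p21 b a)
        - ∑ a : V1, p12 a b * Real.log (p21 b a) := by
    intro b
    have hrw : ∀ a, p12 a b * Real.log (p12 a b / q12 a b)
        = p12 a b * Real.log (∑ a' : V1, p12 a' b * p21 b a')
          - p12 a b * Real.log (p21 b a) := by
      intro a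
      have h1 : p12 a b / q12 a b = (∑ a' : V1, p12 a' b * p21 b a') / p21 b a := by
        have h2 := (hp12 a b).ne'
        have h3 := (hp21 b a).ne'
        have h4 := (hS b).ne'
        rw [hq12]
        field_simp
      rw [h1, Real.log_div (hS b).ne' (hp21 b a).ne', mul_sub]
    rw [Finset.sum_congr rfl (fun a _ => hrw a), Finset.sum_sub_distrib,
      ← Finset.sum_mul, hmsum12, one_mul]
  constructor
  · intro h b w1 w1'
    exact (jensen_gap_zero_iff_aux (fun a => p12 a b) (fun a => hp12 a b) (hmsum12 b)
      (fun a => p21 b a) (fun a => hp21 b a)).1 (by rw [← key b]; exact h b) w1 w1'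
  · intro h b
    rw [key b]
    exact (jensen_gap_zero_iff_aux (fun a => p12 a b) (fun a => hp12 a b) (hmsum12 b)
      (fun a => p21 b a) (fun a => hp21 b a)).2 (h b)
end
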